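/- If (u_n) is a sequence of positive reals that is increasing and tends to +∞, then the series ∑ (u_n - u_{n-1})/u_n diverges. -/

import Mathlib

theorem stmt_0 (u : ℕ → ℝ) (hpos : ∀ n, 0 < u n) (hmono : Monotone u)
    (htop : Filter.Tendsto u Filter.atTop Filter.atTop) :
    Filter.Tendsto (fun n => ∑ i ∈ Finset.Icc 1 n, (u i - u (i - 1)) / u i)
      Filter.atTop Filter.atTop := by
  set v : ℕ → ℝ := fun i => (u i - u (i - 1)) / u i with hv
  have hvnonneg : ∀ i, 0 ≤ v i := fun i =>
    div_nonneg (sub_nonneg.2 (hmono (Nat.sub_le i 1))) (hpos i).le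
  set S : ℕ → ℝ := fun n => ∑ i ∈ Finset.Icc 1 n, v i with hS
  have hSmono : Monotone S := by
    intro a b hab
    exact Finset.sum_le_sum_of_subset_of_nonneg (Finset.Icc_subset_Icc_right hab)
      (fun i _ _ => hvnonneg i)
  have hIcc : ∀ n : ℕ, Finset.Icc 1 n = Finset.Ioc 0 n := fun n => by
    rw [← Finset.Icc_add_one_left_eq_Ioc, zero_add]
  have tele : ∀ n N : ℕ, n ≤ N → ∑ i ∈ Finset.Ioc n N, (u i - u (i - 1)) = u N - u n := by
    intro n N hnN
    induction N, hnN using Nat.le_induction with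
    | base => simp
    | succ N hnN ih =>
      rw [Finset.sum_Ioc_succ_top hnN, ih]
      simp
  have key : ∀ n : ℕ, ∃ N, S n + 1 / 2 ≤ S N := by
    intro n
    obtain ⟨N, h2u, hnN⟩ :=
      ((htop.eventually_ge_atTop (2 * u n)).and (Filter.eventually_ge_atTop n)).exists
    refine ⟨N, ?_⟩
    have hsplit : S n + ∑ i ∈ Finset.Ioc n N, v i = S N := by
      rw [hS]
      simp only [hIcc]
      exact Finset.sum_Ioc_consecutive v (Nat.zero_le n) hnN
    have hbound : (1 : ℝ) / 2 ≤ ∑ i ∈ Finset.Ioc n N, v i := by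
      have h1 : ∑ i ∈ Finset.Ioc n N, (u i - u (i - 1)) / u N ≤ ∑ i ∈ Finset.Ioc n N, v i := by
        apply Finset.sum_le_sum
        intro i hi
        have hiN : i ≤ N := (Finset.mem_Ioc.1 hi).2
        have : 0 < u i := hpos i
        exact div_le_div_of_nonneg_left (sub_nonneg.2 (hmono (Nat.sub_le i 1))) (hpos i) (hmono hiN)
      have h2 : ∑ i ∈ Finset.Ioc n N, (u i - u (i - 1)) / u N = (u N - u n) / u N := by
        rw [← Finset.sum_div, tele n N hnN]
      have h3 : (1 : ℝ) / 2 ≤ (u N - u n) / u N := by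
        rw [le_div_iff₀ (hpos N)]
        nlinarith [hpos n, hpos N]
      calc (1 : ℝ) / 2 ≤ (u N - u n) / u N := h3
        _ = _ := h2.symm
        _ ≤ _ := h1
    linarith [hsplit]
  apply hSmono.tendsto_atTop_atTop
  intro b
  obtain ⟨k, hk⟩ := exists_nat_ge (2 * b)
  have hkey : ∀ k : ℕ, ∃ n, (k : ℝ) / 2 ≤ S n := by
    intro k
    induction k with
    | zero =>
      refine ⟨0, ?_⟩
      simp [hS]
    | succ k ih =>
      obtain ⟨n, hn⟩ := ih
      obtain ⟨N, hN⟩ := key n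
      refine ⟨N, ?_⟩
      push_cast
      linarith
  obtain ⟨n, hn⟩ := hkey k
  exact ⟨n, by linarith⟩
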